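/- Let Γ be a countable group, 𝒢 a family of subgroups containing the trivial subgroup, and suppose there exists a map μ : Γ → Prob(Γ) with lim_{k→∞/𝒢} ‖μ(gkh) − g·μ(k)‖₁ = 0 for all g, h ∈ Γ. Then there exists a map c : Γ → ℓ²_ℝ(Γ) that is proper relative to 𝒢 and satisfies sup_{k∈Γ} ‖c(gkh) − λ_g c(k)‖₂ < ∞ for all g, h ∈ Γ. -/

import Mathlib

/-- A subset `F ⊆ G` is small relative to a family `𝒢` of subgroups of `G` if it is contained
in a finite union of sets of the form `g Σ h` with `g, h ∈ G` and `Σ ∈ 𝒢`. -/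
def SmallRel {G : Type*} [Group G] (𝒢 : Set (Subgroup G)) (F : Set G) : Prop :=
  ∃ (n : ℕ) (g h : Fin n → G) (S : Fin n → Subgroup G),
    (∀ i, S i ∈ 𝒢) ∧ F ⊆ ⋃ i, (fun x => g i * x * h i) '' (S i : Set G)

namespace QCP
variable {G : Type*} [Group G] {𝒢 : Set (Subgroup G)}

theorem smallRel_mono {F F' : Set G} (h : SmallRel 𝒢 F') (hsub : F ⊆ F') :
    SmallRel 𝒢 F := by
  obtain ⟨n, g, h', S, hS, hcov⟩ := h
  exact ⟨n, g, h', S, hS, hsub.trans hcov⟩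

theorem smallRel_empty : SmallRel 𝒢 (∅ : Set G) :=
  ⟨0, finZeroElim, finZeroElim, finZeroElim, fun i => i.elim0, by simp⟩

theorem smallRel_union {F F' : Set G} (h1 : SmallRel 𝒢 F) (h2 : SmallRel 𝒢 F') :
    SmallRel 𝒢 (F ∪ F') := by
  obtain ⟨n1, g1, k1, S1, hS1, hc1⟩ := h1
  obtain ⟨n2, g2, k2, S2, hS2, hc2⟩ := h2
  refine ⟨n1 + n2, Fin.append g1 g2, Fin.append k1 k2, Fin.append S1 S2, ?_, ?_⟩
  · intro i
    refine Fin.addCases (fun j => ?_) (fun j => ?_) i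
    · simpa [Fin.append_left] using hS1 j
    · simpa [Fin.append_right] using hS2 j
  · rintro x (hx | hx)
    · obtain ⟨j, hj⟩ := Set.mem_iUnion.1 (hc1 hx)
      exact Set.mem_iUnion.2 ⟨Fin.castAdd n2 j, by simpa [Fin.append_left] using hj⟩
    · obtain ⟨j, hj⟩ := Set.mem_iUnion.1 (hc2 hx)
      exact Set.mem_iUnion.2 ⟨Fin.natAdd n1 j, by simpa [Fin.append_right] using hj⟩

theorem smallRel_singleton (htriv : ⊥ ∈ 𝒢) (x : G) : SmallRel 𝒢 ({x} : Set G) := by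
  refine ⟨1, fun _ => x, fun _ => 1, fun _ => ⊥, fun _ => htriv, ?_⟩
  rintro y rfl
  exact Set.mem_iUnion.2 ⟨0, ⟨1, by simp⟩⟩

theorem smallRel_biUnion {ι : Type*} {s : Set ι} (hs : s.Finite) {f : ι → Set G}
    (h : ∀ i ∈ s, SmallRel 𝒢 (f i)) : SmallRel 𝒢 (⋃ i ∈ s, f i) := by
  refine Set.Finite.induction_on_subset (motive := fun t _ => SmallRel 𝒢 (⋃ i ∈ t, f i)) _ hs
    (by simpa using (smallRel_empty : SmallRel 𝒢 (∅ : Set G))) ?_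
  intro a t haS _ _ ih
  rw [Set.biUnion_insert]
  exact smallRel_union (h a haS) ih

theorem smallRel_of_finite (htriv : ⊥ ∈ 𝒢) {F : Set G} (hF : F.Finite) :
    SmallRel 𝒢 F := by
  have : F = ⋃ x ∈ F, ({x} : Set G) := by simp
  rw [this]
  exact smallRel_biUnion hF fun x _ => smallRel_singleton htriv x

theorem smallRel_image_mul {F : Set G} (h : SmallRel 𝒢 F) (a b : G) :
    SmallRel 𝒢 ((fun x => a * x * b) '' F) := by
  obtain ⟨n, g, k, S, hS, hcov⟩ := h
  refine ⟨n, fun i => a * g i, fun i => k i * b, S, hS, ?_⟩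
  rintro y ⟨x, hx, rfl⟩
  obtain ⟨i, t, ht, rfl⟩ := Set.mem_iUnion.1 (hcov hx)
  exact Set.mem_iUnion.2 ⟨i, t, ht, by simp [mul_assoc]⟩

end QCP

namespace QCP
open scoped Pointwise ENNReal

section Main
variable {Γ : Type*} [Group Γ]

/-- The ℓ¹ defect. -/
noncomputable def Dfun (μ : Γ → Γ → ℝ) (g h k : Γ) : ℝ :=
  ∑' s, |μ (g * k * h) s - μ k (g⁻¹ * s)|

/-- An increasing symmetric exhaustion by finite sets. -/
def Fset (e : ℕ → Γ) (n : ℕ) : Set Γ :=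
  {1} ∪ ((e '' Set.Iic n) ∪ (e '' Set.Iic n)⁻¹)

lemma Fset_finite (e : ℕ → Γ) (n : ℕ) : (Fset e n).Finite := by
  have h : (e '' Set.Iic n).Finite := (Set.finite_Iic n).image e
  exact (Set.finite_singleton 1).union (h.union h.inv)

lemma one_mem_Fset (e : ℕ → Γ) (n : ℕ) : (1 : Γ) ∈ Fset e n := Or.inl rfl

lemma Fset_mono (e : ℕ → Γ) {n m : ℕ} (h : n ≤ m) : Fset e n ⊆ Fset e m := by
  have h1 : e '' Set.Iic n ⊆ e '' Set.Iic m := Set.image_mono (Set.Iic_subset_Iic.2 h)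
  exact Set.union_subset_union_right _ (Set.union_subset_union h1 (Set.inv_subset_inv.2 h1))

lemma Fset_inv (e : ℕ → Γ) {n : ℕ} {a : Γ} (h : a ∈ Fset e n) : a⁻¹ ∈ Fset e n := by
  rcases h with h | h | h
  · simp only [Set.mem_singleton_iff] at h; subst h; exact Or.inl (by simp)
  · exact Or.inr (Or.inr (by simpa using h))
  · exact Or.inr (Or.inl (by simpa using h))

lemma mem_Fset (e : ℕ → Γ) (he : Function.Surjective e) (x : Γ) : ∃ n, x ∈ Fset e n := by
  obtain ⟨m, rfl⟩ := he x
  exact ⟨m, Or.inr (Or.inl ⟨m, le_refl m, rfl⟩)⟩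

/-- Thresholded defect sets. -/
noncomputable def Aset (μ : Γ → Γ → ℝ) (e : ℕ → Γ) (n : ℕ) : Set Γ :=
  {k | ∃ a ∈ Fset e n, ∃ b ∈ Fset e n, (1 / 4 : ℝ) ^ n < Dfun μ a b k}

/-- The increasing translation-stable family of small sets. -/
noncomputable def Cset (μ : Γ → Γ → ℝ) (e : ℕ → Γ) : ℕ → Set Γ
  | 0 => Aset μ e 0 ∪ Fset e 0
  | n + 1 => ⋃ a ∈ Fset e (n + 1), ⋃ b ∈ Fset e (n + 1),
      (fun x => a * x * b) '' (Cset μ e n ∪ (Aset μ e (n + 1) ∪ Fset e (n + 1)))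

lemma mul_mem_Cset {μ : Γ → Γ → ℝ} {e : ℕ → Γ} {n : ℕ} {a b x : Γ}
    (ha : a ∈ Fset e (n + 1)) (hb : b ∈ Fset e (n + 1))
    (hx : x ∈ Cset μ e n ∪ (Aset μ e (n + 1) ∪ Fset e (n + 1))) :
    a * x * b ∈ Cset μ e (n + 1) := by
  rw [Cset]
  exact Set.mem_biUnion ha (Set.mem_biUnion hb ⟨x, hx, rfl⟩)

lemma Cset_subset_succ (μ : Γ → Γ → ℝ) (e : ℕ → Γ) (n : ℕ) :
    Cset μ e n ⊆ Cset μ e (n + 1) := by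
  intro x hx
  have := mul_mem_Cset (one_mem_Fset e (n + 1)) (one_mem_Fset e (n + 1)) (Or.inl hx)
  simpa using this

lemma Cset_mono (μ : Γ → Γ → ℝ) (e : ℕ → Γ) {n m : ℕ} (h : n ≤ m) :
    Cset μ e n ⊆ Cset μ e m :=
  monotone_nat_of_le_succ (Cset_subset_succ μ e) h

lemma Aset_subset_Cset (μ : Γ → Γ → ℝ) (e : ℕ → Γ) (n : ℕ) :
    Aset μ e n ⊆ Cset μ e n := by
  cases n with
  | zero => exact Set.subset_union_left
  | succ n =>
    intro x hx
    have := mul_mem_Cset (one_mem_Fset e (n + 1)) (one_mem_Fset e (n + 1))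
      (Or.inr (Or.inl hx))
    simpa using this

lemma Fset_subset_Cset (μ : Γ → Γ → ℝ) (e : ℕ → Γ) (n : ℕ) :
    Fset e n ⊆ Cset μ e n := by
  cases n with
  | zero => exact Set.subset_union_right
  | succ n =>
    intro x hx
    have := mul_mem_Cset (μ := μ) (one_mem_Fset e (n + 1)) (one_mem_Fset e (n + 1))
      (Or.inr (Or.inr hx))
    simpa using this

lemma Aset_small {𝒢 : Set (Subgroup Γ)} (μ : Γ → Γ → ℝ) (e : ℕ → Γ)
    (hconv : ∀ g h : Γ, ∀ ε > (0 : ℝ), SmallRel 𝒢 {k | ε < Dfun μ g h k}) (n : ℕ) :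
    SmallRel 𝒢 (Aset μ e n) := by
  have hsub : Aset μ e n ⊆
      ⋃ a ∈ Fset e n, ⋃ b ∈ Fset e n, {k | (1 / 4 : ℝ) ^ n < Dfun μ a b k} := by
    rintro k ⟨a, ha, b, hb, hk⟩
    exact Set.mem_biUnion ha (Set.mem_biUnion hb hk)
  refine smallRel_mono (smallRel_biUnion (Fset_finite e n) fun a _ => ?_) hsub
  refine smallRel_biUnion (Fset_finite e n) fun b _ => ?_
  exact hconv a b _ (by positivity)

lemma Cset_small {𝒢 : Set (Subgroup Γ)} (htriv : ⊥ ∈ 𝒢) (μ : Γ → Γ → ℝ) (e : ℕ → Γ)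
    (hconv : ∀ g h : Γ, ∀ ε > (0 : ℝ), SmallRel 𝒢 {k | ε < Dfun μ g h k}) (n : ℕ) :
    SmallRel 𝒢 (Cset μ e n) := by
  induction n with
  | zero =>
    exact smallRel_union (Aset_small μ e hconv 0)
      (smallRel_of_finite htriv (Fset_finite e 0))
  | succ n ih =>
    rw [Cset]
    refine smallRel_biUnion (Fset_finite e (n + 1)) fun a _ => ?_
    refine smallRel_biUnion (Fset_finite e (n + 1)) fun b _ => ?_
    exact smallRel_image_mul
      (smallRel_union ih (smallRel_union (Aset_small μ e hconv (n + 1))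
        (smallRel_of_finite htriv (Fset_finite e (n + 1))))) a b

end Main

section L2
variable {α : Type*}

lemma l2_norm_eq (f : lp (fun _ : α => ℝ) 2) :
    ‖f‖ = Real.sqrt (∑' s, (f s) ^ 2) := by
  have hp : 0 < (2 : ℝ≥0∞).toReal := by norm_num
  rw [lp.norm_eq_tsum_rpow hp f]
  have h1 : (1 / (2 : ℝ≥0∞).toReal) = (1 / 2 : ℝ) := by norm_num
  have h2 : ∑' s, ‖f s‖ ^ (2 : ℝ≥0∞).toReal = ∑' s, (f s) ^ 2 :=
    tsum_congr fun s => by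
      rw [show ((2 : ℝ≥0∞)).toReal = (2 : ℝ) from by norm_num, Real.rpow_two,
        Real.norm_eq_abs, sq_abs]
  rw [h1, h2, Real.sqrt_eq_rpow]

lemma l2_summable_sq (f : lp (fun _ : α => ℝ) 2) :
    Summable fun s => (f s) ^ 2 := by
  have h := (lp.memℓp f).summable (by norm_num : 0 < (2 : ℝ≥0∞).toReal)
  have h2 : (fun s => ‖f s‖ ^ (2 : ℝ≥0∞).toReal) = fun s => (f s) ^ 2 :=
    funext fun s => by
      rw [show ((2 : ℝ≥0∞)).toReal = (2 : ℝ) from by norm_num, Real.rpow_two,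
        Real.norm_eq_abs, sq_abs]
  rwa [h2] at h

lemma memℓp_of_summable_sq {f : α → ℝ} (h : Summable fun s => (f s) ^ 2) :
    Memℓp f 2 := by
  apply memℓp_gen
  have h2 : (fun s => ‖f s‖ ^ (2 : ℝ≥0∞).toReal) = fun s => (f s) ^ 2 :=
    funext fun s => by
      rw [show ((2 : ℝ≥0∞)).toReal = (2 : ℝ) from by norm_num, Real.rpow_two,
        Real.norm_eq_abs, sq_abs]
  rwa [h2]

lemma sq_sqrt_sub_le {a b : ℝ} (ha : 0 ≤ a) (hb : 0 ≤ b) :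
    (Real.sqrt a - Real.sqrt b) ^ 2 ≤ |a - b| := by
  rcases le_total a b with h | h
  · rw [abs_of_nonpos (by linarith)]
    nlinarith [Real.sq_sqrt ha, Real.sq_sqrt hb, Real.sqrt_le_sqrt h,
      Real.sqrt_nonneg a, Real.sqrt_nonneg b]
  · rw [abs_of_nonneg (by linarith)]
    nlinarith [Real.sq_sqrt hb, Real.sq_sqrt ha, Real.sqrt_le_sqrt h,
      Real.sqrt_nonneg a, Real.sqrt_nonneg b]

end L2

section Vec
variable {Γ : Type*} [Group Γ] (μ : Γ → Γ → ℝ)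
  (hμ : ∀ k, (∀ s, 0 ≤ μ k s) ∧ Summable (μ k) ∧ ∑' s, μ k s = 1)
include hμ

lemma summable_shift (g k : Γ) : Summable fun s => μ k (g⁻¹ * s) :=
  (hμ k).2.1.comp_injective (mul_right_injective g⁻¹)

lemma Dfun_summable (g h k : Γ) :
    Summable fun s => |μ (g * k * h) s - μ k (g⁻¹ * s)| :=
  ((hμ (g * k * h)).2.1.sub (summable_shift μ hμ g k)).abs

lemma Dfun_nonneg (g h k : Γ) : 0 ≤ Dfun μ g h k :=
  tsum_nonneg fun s => abs_nonneg _

/-- square root of the measure, as an ℓ² vector. -/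
noncomputable def vvec (k : Γ) : lp (fun _ : Γ => ℝ) 2 :=
  ⟨fun s => Real.sqrt (μ k s), memℓp_of_summable_sq (by
    have h2 : (fun s => (Real.sqrt (μ k s)) ^ 2) = μ k :=
      funext fun s => Real.sq_sqrt ((hμ k).1 s)
    rw [h2]; exact (hμ k).2.1)⟩

/-- left-translate of `vvec`. -/
noncomputable def uvec (g k : Γ) : lp (fun _ : Γ => ℝ) 2 :=
  ⟨fun s => Real.sqrt (μ k (g⁻¹ * s)), memℓp_of_summable_sq (by
    have h2 : (fun s => (Real.sqrt (μ k (g⁻¹ * s))) ^ 2) = fun s => μ k (g⁻¹ * s) :=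
      funext fun s => Real.sq_sqrt ((hμ k).1 _)
    rw [h2]; exact summable_shift μ hμ g k)⟩

@[simp] lemma vvec_apply (k s : Γ) : (vvec μ hμ k : ∀ _ : Γ, ℝ) s = Real.sqrt (μ k s) := rfl

@[simp] lemma uvec_apply (g k s : Γ) :
    (uvec μ hμ g k : ∀ _ : Γ, ℝ) s = Real.sqrt (μ k (g⁻¹ * s)) := rfl

lemma vvec_norm (k : Γ) : ‖vvec μ hμ k‖ = 1 := by
  rw [l2_norm_eq]
  have h2 : ∑' s, ((vvec μ hμ k : ∀ _ : Γ, ℝ) s) ^ 2 = ∑' s, μ k s :=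
    tsum_congr fun s => by rw [vvec_apply, Real.sq_sqrt ((hμ k).1 s)]
  rw [h2, (hμ k).2.2, Real.sqrt_one]

lemma uvec_norm (g k : Γ) : ‖uvec μ hμ g k‖ = 1 := by
  rw [l2_norm_eq]
  have h2 : ∑' s, ((uvec μ hμ g k : ∀ _ : Γ, ℝ) s) ^ 2 = ∑' s, μ k (g⁻¹ * s) :=
    tsum_congr fun s => by rw [uvec_apply, Real.sq_sqrt ((hμ k).1 _)]
  have h3 : ∑' s, μ k (g⁻¹ * s) = ∑' s, μ k s := by
    simpa using (Equiv.mulLeft g⁻¹).tsum_eq (μ k)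
  rw [h2, h3, (hμ k).2.2, Real.sqrt_one]

lemma vu_dist (g h k : Γ) :
    ‖vvec μ hμ (g * k * h) - uvec μ hμ g k‖ ≤ Real.sqrt (Dfun μ g h k) := by
  rw [l2_norm_eq]
  apply Real.sqrt_le_sqrt
  refine Summable.tsum_le_tsum (fun s => ?_) (l2_summable_sq _) (Dfun_summable μ hμ g h k)
  have h2 : ((vvec μ hμ (g * k * h) - uvec μ hμ g k : lp (fun _ : Γ => ℝ) 2) : ∀ _ : Γ, ℝ) s
      = Real.sqrt (μ (g * k * h) s) - Real.sqrt (μ k (g⁻¹ * s)) := by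
    rw [lp.coeFn_sub]; rfl
  rw [h2]
  exact sq_sqrt_sub_le ((hμ (g * k * h)).1 s) ((hμ k).1 _)

end Vec

end QCP

open QCP

/-- If there is `μ : Γ → Prob(Γ)` with `lim_{k→∞/𝒢} ‖μ(gkh) - g·μ(k)‖₁ = 0` for all
`g, h ∈ Γ`, then there is a map `c : Γ → ℓ²_ℝ(Γ)` that is proper relative to `𝒢` and
satisfies `sup_k ‖c(gkh) - λ_g c(k)‖₂ < ∞` for all `g, h ∈ Γ`. -/
theorem exists_proper_quasi_cocycle {Γ : Type*} [Group Γ] [Countable Γ]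
    (𝒢 : Set (Subgroup Γ)) (htriv : ⊥ ∈ 𝒢)
    (μ : Γ → Γ → ℝ)
    (hprob : ∀ k, (∀ s, 0 ≤ μ k s) ∧ Summable (μ k) ∧ ∑' s, μ k s = 1)
    (hconv : ∀ g h : Γ, ∀ ε > (0 : ℝ),
      SmallRel 𝒢 {k | ε < ∑' s, |μ (g * k * h) s - μ k (g⁻¹ * s)|}) :
    ∃ c : Γ → lp (fun _ : Γ => ℝ) 2,
      (∀ κ > (0 : ℝ), SmallRel 𝒢 {k | ‖c k‖ < κ}) ∧
      (∀ g h : Γ, ∃ C : ℝ, ∀ k : Γ,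
        Real.sqrt (∑' s, (c (g * k * h) s - c k (g⁻¹ * s)) ^ 2) ≤ C) := by
  classical
  haveI : Nonempty Γ := ⟨1⟩
  obtain ⟨e, he⟩ := exists_surjective_nat Γ
  have hconv' : ∀ g h : Γ, ∀ ε > (0 : ℝ), SmallRel 𝒢 {k | ε < Dfun μ g h k} := hconv
  have hexh : ∀ k : Γ, ∃ n, k ∈ Cset μ e n := by
    intro k
    obtain ⟨n, hn⟩ := mem_Fset e he k
    exact ⟨n, Fset_subset_Cset μ e n hn⟩
  set n0 : Γ → ℕ := fun k => Nat.find (hexh k) with hn0def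
  have hmem : ∀ k, k ∈ Cset μ e (n0 k) := fun k => Nat.find_spec (hexh k)
  have key : ∀ (g h : Γ) (m : ℕ), g ∈ Fset e m → h ∈ Fset e m → ∀ k : Γ,
      n0 (g * k * h) ≤ max m (n0 k) + 1 := by
    intro g h m hg hh k
    have h1 : k ∈ Cset μ e (max m (n0 k)) :=
      Cset_mono μ e (le_max_right m (n0 k)) (hmem k)
    have hmle : m ≤ max m (n0 k) + 1 := le_trans (le_max_left _ _) (Nat.le_succ _)
    have h2 : g * k * h ∈ Cset μ e (max m (n0 k) + 1) :=
      mul_mem_Cset (Fset_mono e hmle hg) (Fset_mono e hmle hh) (Or.inl h1)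
    exact Nat.find_le h2
  refine ⟨fun k => (n0 k : ℝ) • vvec μ hprob k, ?_, ?_⟩
  · -- properness
    intro κ hκ
    have hsub : {k : Γ | ‖(n0 k : ℝ) • vvec μ hprob k‖ < κ} ⊆ Cset μ e ⌈κ⌉₊ := by
      intro k hk
      rw [Set.mem_setOf_eq, norm_smul, vvec_norm, mul_one, Real.norm_natCast] at hk
      exact Cset_mono μ e (le_of_lt (Nat.lt_ceil.2 hk)) (hmem k)
    exact smallRel_mono (Cset_small htriv μ e hconv' ⌈κ⌉₊) hsub
  · -- quasi-cocycle bound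
    intro g h
    obtain ⟨m1, hm1⟩ := mem_Fset e he g
    obtain ⟨m2, hm2⟩ := mem_Fset e he h
    set m := max m1 m2 with hmdef
    have hg : g ∈ Fset e m := Fset_mono e (le_max_left _ _) hm1
    have hh : h ∈ Fset e m := Fset_mono e (le_max_right _ _) hm2
    refine ⟨3 * (m : ℝ) + 3, fun k => ?_⟩
    set a' : ℝ := (n0 (g * k * h) : ℝ) with ha'def
    set a : ℝ := (n0 k : ℝ) with hadef
    set v' := vvec μ hprob (g * k * h) with hv'def
    set u := uvec μ hprob g k with hudef
    set w : lp (fun _ : Γ => ℝ) 2 := a' • v' - a • u with hwdef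
    have ha0 : (0 : ℝ) ≤ a := Nat.cast_nonneg _
    -- identify the LHS with ‖w‖
    have hpt : ∀ s : Γ,
        ((n0 (g * k * h) : ℝ) • vvec μ hprob (g * k * h)) s
          - ((n0 k : ℝ) • vvec μ hprob k) (g⁻¹ * s) = (w : ∀ _ : Γ, ℝ) s := by
      intro s
      rw [hwdef, lp.coeFn_sub, Pi.sub_apply, lp.coeFn_smul, lp.coeFn_smul,
        lp.coeFn_smul, Pi.smul_apply, Pi.smul_apply, Pi.smul_apply,
        smul_eq_mul, smul_eq_mul, smul_eq_mul]
      rfl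
    have hLHS : Real.sqrt (∑' s, (((n0 (g * k * h) : ℝ) • vvec μ hprob (g * k * h)) s
        - ((n0 k : ℝ) • vvec μ hprob k) (g⁻¹ * s)) ^ 2) = ‖w‖ := by
      rw [tsum_congr fun s => by rw [hpt s]]
      exact (l2_norm_eq w).symm
    rw [hLHS]
    -- split
    have hsplit : w = (a' - a) • v' + a • (v' - u) := by
      rw [hwdef, sub_smul, smul_sub]; abel
    have hbound : ‖w‖ ≤ |a' - a| + a * ‖v' - u‖ := by
      rw [hsplit]
      refine (norm_add_le _ _).trans ?_
      rw [norm_smul, norm_smul, vvec_norm, mul_one, Real.norm_eq_abs,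
        Real.norm_eq_abs, abs_of_nonneg ha0]
    -- estimate |a' - a|
    have hk1 : n0 (g * k * h) ≤ m + n0 k + 1 :=
      le_trans (key g h m hg hh k) (by omega)
    have hk2 : n0 k ≤ m + n0 (g * k * h) + 1 := by
      have e2 : g⁻¹ * (g * k * h) * h⁻¹ = k := by group
      have := key g⁻¹ h⁻¹ m (Fset_inv e hg) (Fset_inv e hh) (g * k * h)
      rw [e2] at this
      exact le_trans this (by omega)
    have hA : |a' - a| ≤ (m : ℝ) + 1 := by
      rw [abs_sub_le_iff]
      constructor
      · have : (n0 (g * k * h) : ℝ) ≤ (m : ℝ) + (n0 k : ℝ) + 1 := by exact_mod_cast hk1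
        rw [ha'def, hadef]; linarith
      · have : (n0 k : ℝ) ≤ (m : ℝ) + (n0 (g * k * h) : ℝ) + 1 := by exact_mod_cast hk2
        rw [ha'def, hadef]; linarith
    -- estimate a * ‖v' - u‖
    have hvu2 : ‖v' - u‖ ≤ 2 := by
      refine (norm_sub_le _ _).trans ?_
      rw [hv'def, hudef, vvec_norm, uvec_norm]; norm_num
    have hB : a * ‖v' - u‖ ≤ 2 * (m : ℝ) + 2 := by
      rcases le_or_gt (n0 k) m with hcase | hcase
      · have ham : a ≤ (m : ℝ) := by rw [hadef]; exact_mod_cast hcase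
        have := mul_le_mul ham hvu2 (norm_nonneg _) (by positivity)
        linarith
      · set j := n0 k - 1 with hjdef
        have hjm : m ≤ j := by omega
        have hjlt : j < n0 k := by omega
        have hkC : k ∉ Cset μ e j := Nat.find_min (hexh k) hjlt
        have hkA : k ∉ Aset μ e j := fun hx => hkC (Aset_subset_Cset μ e j hx)
        have hD : Dfun μ g h k ≤ (1 / 4 : ℝ) ^ j := by
          by_contra hlt
          push_neg at hlt
          exact hkA ⟨g, Fset_mono e hjm hg, h, Fset_mono e hjm hh, hlt⟩
        have hsq : Real.sqrt ((1 / 4 : ℝ) ^ j) = (1 / 2 : ℝ) ^ j := by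
          have h4 : ((1 / 2 : ℝ) ^ j) ^ 2 = (1 / 4 : ℝ) ^ j := by
            rw [← pow_mul, mul_comm, pow_mul]; norm_num
          rw [← h4, Real.sqrt_sq (by positivity)]
        have hvu : ‖v' - u‖ ≤ (1 / 2 : ℝ) ^ j := by
          refine le_trans ?_ (le_of_eq hsq)
          exact le_trans (vu_dist μ hprob g h k) (Real.sqrt_le_sqrt hD)
        have h2j : (0 : ℝ) < 2 ^ j := by positivity
        have h2N : (n0 k : ℝ) ≤ 2 * 2 ^ j := by
          have hnat : n0 k ≤ 2 ^ (j + 1) := by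
            have := Nat.lt_two_pow_self (n := n0 k)
            have hj1 : j + 1 = n0 k := by omega
            rw [hj1]; omega
          calc (n0 k : ℝ) ≤ ((2 ^ (j + 1) : ℕ) : ℝ) := by exact_mod_cast hnat
            _ = 2 * 2 ^ j := by push_cast [pow_succ]; ring
        have hfin : a * (1 / 2 : ℝ) ^ j ≤ 2 := by
          rw [one_div, inv_pow, mul_comm, inv_mul_le_iff₀ h2j]
          rw [hadef]
          linarith
        have := mul_le_mul_of_nonneg_left hvu ha0
        have hfin2 : a * ‖v' - u‖ ≤ 2 := le_trans this hfin
        have hm0 : (0:ℝ) ≤ (m : ℝ) := Nat.cast_nonneg _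
        linarith
    calc ‖w‖ ≤ |a' - a| + a * ‖v' - u‖ := hbound
      _ ≤ ((m : ℝ) + 1) + (2 * (m : ℝ) + 2) := add_le_add hA hB
      _ = 3 * (m : ℝ) + 3 := by ring
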